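/- For a Catalan word w with profile (ℓ_0, h_1, ℓ_1, h_2, …, h_r, ℓ_r), the coefficient C(w) = ∏_{i=0}^{2n} [1 + e_i]_q (product over the elevation sequence) equals ( [h_1]_q! ⋯ [h_r]_q! / ([ℓ_0]_q! ⋯ [ℓ_r]_q!) ) · ( [h_1+1]_q! ⋯ [h_r+1]_q! / ([ℓ_0+1]_q! ⋯ [ℓ_r+1]_q!) ), where [m]_q! = [m]_q [m-1]_q ⋯ [1]_q. -/

import Mathlib

open scoped Classical

inductive Letter | x | y
deriving DecidableEq

instance : Fintype Letter := ⟨{Letter.x, Letter.y}, fun a => by cases a <;> simp⟩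

/-- x ↦ 1, y ↦ -1 -/
def bar : Letter → ℤ
  | .x => 1
  | .y => -1

/-- σ swaps the letters x and y. -/
def sigma : Letter → Letter
  | .x => .y
  | .y => .x

/-- the pairing ⟨u,v⟩ : 2 if u = v, -2 otherwise. -/
def pair : Letter → Letter → ℤ := fun u v => if u = v then 2 else -2

noncomputable section

/-- The free associative algebra on the two letters x, y (with its word basis). -/
abbrev V (F : Type*) [Field F] := MonoidAlgebra F (FreeMonoid Letter)

variable {F : Type*} [Field F]

/-- the basis word of V corresponding to a list of letters -/
def wd (w : List Letter) : V F := MonoidAlgebra.single (FreeMonoid.ofList w) 1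

/-- the q-shuffle product of two words, by the left recursion -/
def shuffleWord (q : F) : List Letter → List Letter → V F
  | [], v => wd v
  | u1 :: ut, [] => wd (u1 :: ut)
  | u1 :: ut, v1 :: vt =>
      wd [u1] * shuffleWord q ut (v1 :: vt)
      + q ^ (((u1 :: ut).map (fun a => pair a v1)).sum) •
          (wd [v1] * shuffleWord q (u1 :: ut) vt)
termination_by u v => u.length + v.length

/-- the q-shuffle product on V, extended bilinearly -/
def shuffle (q : F) (a b : V F) : V F :=
  a.coeff.sum fun u cu => b.coeff.sum fun v cv =>
    (cu * cv) • shuffleWord q (FreeMonoid.toList u) (FreeMonoid.toList v)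

/-- the quantum integer [m]_q -/
def qint (q : F) (m : ℤ) : F := (q ^ m - q ^ (-m)) / (q - q⁻¹)

/-- the quantum factorial [m]_q! -/
def qfac (q : F) (m : ℤ) : F := ∏ j ∈ Finset.range m.toNat, qint q ((j : ℤ) + 1)

/-- e_i = ā_1 + ⋯ + ā_i, the i-th elevation of the word w -/
def esum (w : List Letter) (i : ℕ) : ℤ := ((w.take i).map bar).sum

/-- A word is Catalan when all partial sums of bar are nonnegative and the total is zero. -/
def IsCatalan (w : List Letter) : Prop :=
  (∀ i, i ≤ w.length → 0 ≤ esum w i) ∧ esum w w.length = 0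

/-- the coefficient C(w) = ∏_{i=0}^{2n} [1 + e_i]_q -/
def Ccoef (q : F) (w : List Letter) : F :=
  ∏ i ∈ Finset.range (w.length + 1), qint q (1 + esum w i)

/-- the n-th Catalan element C_n = ∑_{w ∈ Cat_n} C(w) w  -/
def catalanElt (q : F) (n : ℕ) : V F :=
  ∑ f : Fin (2 * n) → Letter,
    if IsCatalan (List.ofFn f) then Ccoef q (List.ofFn f) • wd (List.ofFn f) else 0

/-- the antiautomorphism ζ : reverse the word and swap x,y, extended linearly -/
def zeta (a : V F) : V F :=
  a.coeff.sum fun w c =>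
    MonoidAlgebra.single (FreeMonoid.ofList (((FreeMonoid.toList w).map sigma).reverse)) c

/-- The profile of a word: delete from the elevation sequence every interior e_i
    such that e_{i+1}-e_i and e_i-e_{i-1} have the same sign. -/
def profile (w : List Letter) : List ℤ :=
  (List.range (w.length + 1)).filterMap fun i =>
    if i = 0 ∨ i = w.length then some (esum w i)
    else if 0 < (esum w (i + 1) - esum w i) * (esum w i - esum w (i - 1)) then none
    else some (esum w i)

/-- The list (ℓ_0, h_1, ℓ_1, h_2, …, h_r, ℓ_r). -/
def P (r : ℕ) (ℓ h : ℕ → ℤ) : List ℤ :=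
  List.ofFn fun i : Fin (2 * r + 1) =>
    if i.val % 2 = 0 then ℓ (i.val / 2) else h ((i.val + 1) / 2)

/-- the word x^{h_1} y^{h_1-ℓ_1} x^{h_2-ℓ_1} y^{h_2-ℓ_2} ⋯ x^{h_r-ℓ_{r-1}} y^{h_r} -/
def explicitWord (r : ℕ) (ℓ h : ℕ → ℤ) : List Letter :=
  (List.range r).flatMap fun i =>
    List.replicate (h (i + 1) - ℓ i).toNat Letter.x ++
      List.replicate (h (i + 1) - ℓ (i + 1)).toNat Letter.y

/-- C(ℓ_0,h_1,…,h_r,ℓ_r), the ratio of q-factorials attached to a profile. -/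
def Cprof (q : F) (r : ℕ) (ℓ h : ℕ → ℤ) : F :=
  (∏ i ∈ Finset.Icc 1 r, qfac q (h i) * qfac q (h i + 1)) /
    (∏ i ∈ Finset.range (r + 1), qfac q (ℓ i) * qfac q (ℓ i + 1))

end

noncomputable section AuxProofs
variable {F : Type*} [Field F]

section qlemmas
variable {q : F} (hq0 : q ≠ 0) (hq : ∀ k : ℕ, 0 < k → q ^ k ≠ 1)

include hq0 hq in
lemma qsub_ne : q - q⁻¹ ≠ 0 := by
  intro h
  have h1 : q = q⁻¹ := sub_eq_zero.mp h
  have : q ^ 2 = 1 := by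
    have := mul_inv_cancel₀ hq0
    calc q ^ 2 = q * q := sq q
    _ = q * q⁻¹ := by rw [← h1]
    _ = 1 := this
  exact hq 2 (by norm_num) this

include hq0 hq in
lemma qint_ne {m : ℤ} (hm : 0 < m) : qint q m ≠ 0 := by
  have hnum : q ^ m - q ^ (-m) ≠ 0 := by
    intro h
    have h1 : q ^ m = q ^ (-m) := sub_eq_zero.mp h
    have h2 : q ^ (2 * m) = 1 := by
      have : q ^ m * q ^ m = q ^ m * q ^ (-m) := by rw [← h1]
      rw [← zpow_add₀ hq0, ← zpow_add₀ hq0] at this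
      simpa [two_mul] using this
    have h3 : q ^ ((2 * m).toNat) = 1 := by
      rw [← zpow_natCast, Int.toNat_of_nonneg (by omega)]; exact h2
    exact hq (2 * m).toNat (by omega) h3
  exact div_ne_zero hnum (qsub_ne hq0 hq)

include hq0 hq in
lemma qint_one : qint q 1 = 1 := by
  rw [qint, zpow_one, zpow_neg, zpow_one, div_self (qsub_ne hq0 hq)]

lemma qfac_zero : qfac q 0 = 1 := by simp [qfac]

include hq0 hq in
lemma qfac_one : qfac q 1 = 1 := by
  simp [qfac, qint_one hq0 hq]

include hq0 hq in
lemma qfac_ne (m : ℤ) : qfac q m ≠ 0 := by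
  rw [qfac]
  exact Finset.prod_ne_zero_iff.mpr fun j _ => qint_ne hq0 hq (by positivity)

lemma qfac_natCast (n : ℕ) : qfac q (n : ℤ) = ∏ j ∈ Finset.range n, qint q ((j : ℤ) + 1) := by
  simp [qfac]

lemma qfac_add (n k : ℕ) :
    qfac q ((n : ℤ) + (k : ℤ)) = qfac q n * ∏ j ∈ Finset.range k, qint q ((n : ℤ) + j + 1) := by
  have : ((n : ℤ) + (k : ℤ)) = ((n + k : ℕ) : ℤ) := by push_cast; ring
  rw [this, qfac_natCast, qfac_natCast, Finset.prod_range_add]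
  refine congrArg _ (Finset.prod_congr rfl fun j _ => congrArg _ ?_)
  push_cast; ring

end qlemmas

section esumlemmas

lemma esum_zero (w : List Letter) : esum w 0 = 0 := by simp [esum]

lemma esum_append (u v : List Letter) (j : ℕ) :
    esum (u ++ v) (u.length + j) = esum u u.length + esum v j := by
  simp [esum, List.take_append, List.take_length, List.take_of_length_le]

lemma esum_append_le (u v : List Letter) {i : ℕ} (h : i ≤ u.length) :
    esum (u ++ v) i = esum u i := by
  simp [esum, List.take_append_of_le_length h]

lemma esum_replicate_x (a i : ℕ) : esum (List.replicate a Letter.x) i = (min i a : ℕ) := by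
  simp [esum, List.take_replicate, List.map_replicate, List.sum_replicate, bar]

lemma esum_replicate_y (a i : ℕ) : esum (List.replicate a Letter.y) i = -(min i a : ℕ) := by
  simp [esum, List.take_replicate, List.map_replicate, List.sum_replicate, bar]

lemma esum_one (z : Letter) (t : List Letter) : esum (z :: t) 1 = bar z := by
  simp [esum]

end esumlemmas

section fmlemmas

lemma filterMap_range_split (f : ℕ → Option ℤ) (p t : ℕ) :
    (List.range (p + t)).filterMap f
      = (List.range p).filterMap f ++ (List.range t).filterMap (fun j => f (p + j)) := by
  rw [List.range_add, List.filterMap_append, List.filterMap_map]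
  rfl

lemma filterMap_range_none (f : ℕ → Option ℤ) (t : ℕ) (h : ∀ j < t, f j = none) :
    (List.range t).filterMap f = [] := by
  rw [List.filterMap_congr (g := fun _ => none) (fun x hx => h x (List.mem_range.mp hx))]
  simp

lemma filterMap_range_one (f : ℕ → Option ℤ) : (List.range 1).filterMap f = (f 0).toList := by
  have : List.range 1 = [0] := rfl
  rw [this]
  cases h : f 0 <;> simp [List.filterMap, h]

lemma filterMap_range_three (f : ℕ → Option ℤ) (c m : ℕ) (v0 : ℤ)
    (h0 : f 0 = some v0) (h1 : ∀ i, 1 ≤ i → i ≤ c → f i = none) :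
    (List.range (c + m + 1)).filterMap f
      = v0 :: (List.range m).filterMap (fun j => f (c + 1 + j)) := by
  have e : c + m + 1 = 1 + c + m := by omega
  rw [e, filterMap_range_split f (1 + c) m, filterMap_range_split f 1 c,
    filterMap_range_one, h0]
  rw [filterMap_range_none (fun j => f (1 + j)) c (fun j hj => h1 (1 + j) (by omega) (by omega))]
  simp only [Option.toList_some, List.nil_append, List.append_nil, List.cons_append]
  congr 1
  refine List.filterMap_congr fun x _ => ?_
  congr 1
  omega

lemma filterMap_range_shift (f : ℕ → Option ℤ) (m p p' : ℕ) (h : ∀ j < m, p + j = p' + j) :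
    (List.range m).filterMap (fun j => f (p + j)) = (List.range m).filterMap (fun j => f (p' + j)) := by
  refine List.filterMap_congr fun x hx => ?_
  rw [h x (List.mem_range.mp hx)]

lemma filterMap_range_five (f : ℕ → Option ℤ) (a b m : ℕ) (ha : 1 ≤ a) (hb : 1 ≤ b)
    (v0 va vc : ℤ)
    (h0 : f 0 = some v0)
    (h1 : ∀ i, 1 ≤ i → i < a → f i = none)
    (h2 : f a = some va)
    (h3 : ∀ i, a + 1 ≤ i → i < a + b → f i = none)
    (h4 : f (a + b) = some vc) :
    (List.range (a + b + m + 1)).filterMap f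
      = v0 :: va :: vc :: (List.range m).filterMap (fun j => f (a + b + 1 + j)) := by
  have e : a + b + m + 1 = (a - 1) + (b + m + 1) + 1 := by omega
  rw [e, filterMap_range_three f (a - 1) (b + m + 1) v0 h0
    (fun i hi1 hi2 => h1 i hi1 (by omega))]
  rw [filterMap_range_shift f (b + m + 1) (a - 1 + 1) a (fun j hj => by omega)]
  have e2 : b + m + 1 = (b - 1) + (m + 1) + 1 := by omega
  rw [e2, filterMap_range_three (fun j => f (a + j)) (b - 1) (m + 1) va (by simpa using h2)
    (fun i hi1 hi2 => h3 (a + i) (by omega) (by omega))]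
  have : (List.range (m + 1)).filterMap (fun j => f (a + (b - 1 + 1 + j)))
      = (List.range (m + 1)).filterMap (fun j => f ((a + b) + j)) := by
    refine List.filterMap_congr fun x hx => ?_
    congr 1
    omega
  rw [this]
  have e3 : m + 1 = 0 + m + 1 := by omega
  rw [e3, filterMap_range_three (fun j => f (a + b + j)) 0 m vc (by simpa using h4)
    (fun i hi1 hi2 => by omega)]
  have : (List.range m).filterMap (fun j => f (a + b + (0 + 1 + j)))
      = (List.range m).filterMap (fun j => f (a + b + 1 + j)) := by
    refine List.filterMap_congr fun x hx => ?_
    congr 1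
    omega
  rw [this]

end fmlemmas

def pf (w : List Letter) (i : ℕ) : Option ℤ :=
  if i = 0 ∨ i = w.length then some (esum w i)
  else if 0 < (esum w (i + 1) - esum w i) * (esum w i - esum w (i - 1)) then none
  else some (esum w i)

lemma profile_def (w : List Letter) :
    profile w = (List.range (w.length + 1)).filterMap (pf w) := rfl

section Plemmas

lemma P_eq_map (r : ℕ) (ℓ h : ℕ → ℤ) :
    P r ℓ h = (List.range (2 * r + 1)).map
      (fun i => if i % 2 = 0 then ℓ (i / 2) else h ((i + 1) / 2)) := by
  apply List.ext_getElem
  · simp [P]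
  · intro i h1 h2
    simp only [P, List.getElem_ofFn, List.getElem_map, List.getElem_range]

lemma P_length (r : ℕ) (ℓ h : ℕ → ℤ) : (P r ℓ h).length = 2 * r + 1 := by simp [P]

lemma P_zero (ℓ h : ℕ → ℤ) : P 0 ℓ h = [ℓ 0] := by
  rw [P_eq_map]
  rfl

lemma P_cons (r : ℕ) (ℓ h : ℕ → ℤ) :
    P (r + 1) ℓ h = ℓ 0 :: h 1 :: P r (fun i => ℓ (i + 1)) (fun i => h (i + 1)) := by
  rw [P_eq_map, P_eq_map]
  have e : 2 * (r + 1) + 1 = 2 + (2 * r + 1) := by omega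
  rw [e, List.range_add, List.map_append, List.map_map]
  have e2 : List.range 2 = [0, 1] := rfl
  rw [e2]
  simp only [List.map_cons, List.map_nil]
  norm_num
  intro a _
  by_cases hi : a % 2 = 0
  · simp [hi]
  · have d2 : (2 + a + 1) / 2 = (a + 1) / 2 + 1 := by omega
    simp [hi, d2]

lemma P_tail_congr (r : ℕ) (ℓ₁ ℓ₂ h : ℕ → ℤ) (hl : ∀ i, 1 ≤ i → ℓ₁ i = ℓ₂ i) :
    P r ℓ₁ h = ℓ₁ 0 :: (P r ℓ₂ h).tail := by
  cases r with
  | zero => rw [P_zero, P_zero]; rfl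
  | succ s =>
    rw [P_cons, P_cons]
    have : (fun i => ℓ₁ (i + 1)) = (fun i => ℓ₂ (i + 1)) := funext fun i => hl (i + 1) (by omega)
    rw [this]
    rfl

end Plemmas

section Cproflemmas
variable {q : F} (hq0 : q ≠ 0) (hq : ∀ k : ℕ, 0 < k → q ^ k ≠ 1)

include hq0 hq in
lemma Cprof_succ (r : ℕ) (ℓ h : ℕ → ℤ) :
    Cprof q (r + 1) ℓ h
      = (qfac q (h 1) * qfac q (h 1 + 1))
        / ((qfac q (ℓ 0) * qfac q (ℓ 0 + 1)) * (qfac q (ℓ 1) * qfac q (ℓ 1 + 1)))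
        * Cprof q r (fun i => if i = 0 then 0 else ℓ (i + 1)) (fun i => h (i + 1)) := by
  have key : ∀ g : ℤ → F, g 0 = 1 →
      True := fun _ _ => trivial
  set A : ℤ → F := fun x => qfac q x * qfac q (x + 1) with hA
  have num1 : (∏ i ∈ Finset.Icc 1 (r + 1), A (h i))
      = A (h 1) * ∏ i ∈ Finset.Icc 1 r, A (h (i + 1)) := by
    rw [show Finset.Icc 1 (r+1) = Finset.Ico 1 (r+2) by rfl,
        show Finset.Icc 1 r = Finset.Ico 1 (r+1) by rfl,
        Finset.prod_Ico_eq_prod_range, Finset.prod_Ico_eq_prod_range]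
    have e1 : r + 2 - 1 = r + 1 := by omega
    have e2 : r + 1 - 1 = r := by omega
    rw [e1, e2, Finset.prod_range_succ']
    have : ∀ k, A (h (1 + (k + 1))) = A (h (1 + k + 1)) := fun k => by ring_nf
    rw [Finset.prod_congr rfl fun k _ => this k]
    ring
  have den1 : (∏ i ∈ Finset.range (r + 2), A (ℓ i))
      = A (ℓ 0) * A (ℓ 1) * ∏ i ∈ Finset.range r, A (ℓ (i + 2)) := by
    rw [Finset.prod_range_succ' (fun i => A (ℓ i)) (r + 1),
        Finset.prod_range_succ' (fun i => A (ℓ (i + 1))) r,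
        Finset.prod_congr rfl fun k (_ : k ∈ Finset.range r) =>
          (by norm_num : A (ℓ (k + 1 + 1)) = A (ℓ (k + 2)))]
    ring
  have den2 : (∏ i ∈ Finset.range (r + 1), A ((fun i => if i = 0 then 0 else ℓ (i + 1)) i))
      = A 0 * ∏ i ∈ Finset.range r, A (ℓ (i + 2)) := by
    rw [Finset.prod_range_succ',
        Finset.prod_congr rfl fun k (_ : k ∈ Finset.range r) =>
          (by norm_num : A (if k + 1 = 0 then 0 else ℓ (k + 1 + 1)) = A (ℓ (k + 2)))]
    norm_num
    ring
  have hA0 : A 0 = 1 := by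
    rw [hA]
    simp only [zero_add]
    rw [qfac_zero, qfac_one hq0 hq]
    ring
  have hnum2 : (∏ i ∈ Finset.Icc 1 r, A ((fun i => h (i + 1)) i))
      = ∏ i ∈ Finset.Icc 1 r, A (h (i + 1)) := rfl
  rw [Cprof, Cprof, num1, den1, den2, hA0, hnum2]
  have h1 : (∏ i ∈ Finset.range r, A (ℓ (i + 2))) ≠ 0 :=
    Finset.prod_ne_zero_iff.mpr fun i _ => mul_ne_zero (qfac_ne hq0 hq _) (qfac_ne hq0 hq _)
  have h2 : A (ℓ 0) ≠ 0 := mul_ne_zero (qfac_ne hq0 hq _) (qfac_ne hq0 hq _)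
  have h3 : A (ℓ 1) ≠ 0 := mul_ne_zero (qfac_ne hq0 hq _) (qfac_ne hq0 hq _)
  field_simp
  simp only [hA]
  field_simp [qfac_ne hq0 hq]

end Cproflemmas

section wordlemmas

def Wrd (a b : ℕ) (w' : List Letter) : List Letter :=
  List.replicate a Letter.x ++ (List.replicate b Letter.y ++ w')

def Vrd (c : ℕ) (w' : List Letter) : List Letter :=
  List.replicate c Letter.x ++ w'

lemma Wrd_length (a b : ℕ) (w' : List Letter) : (Wrd a b w').length = a + b + w'.length := by
  simp [Wrd]; ring

lemma Vrd_length (c : ℕ) (w' : List Letter) : (Vrd c w').length = c + w'.length := by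
  simp [Vrd]

lemma esum_W1 (a b : ℕ) (w' : List Letter) {i : ℕ} (h : i ≤ a) :
    esum (Wrd a b w') i = (i : ℤ) := by
  rw [Wrd, esum_append_le _ _ (by simpa using h), esum_replicate_x]
  omega

lemma esum_W2 (a b : ℕ) (w' : List Letter) {j : ℕ} (h : j ≤ b) :
    esum (Wrd a b w') (a + j) = (a : ℤ) - j := by
  have e : esum (Wrd a b w') ((List.replicate a Letter.x).length + j)
      = esum (List.replicate a Letter.x) (List.replicate a Letter.x).length
        + esum (List.replicate b Letter.y ++ w') j := esum_append _ _ j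
  rw [List.length_replicate] at e
  rw [e, esum_replicate_x, esum_append_le _ _ (by simpa using h), esum_replicate_y]
  omega

lemma esum_W3 (a b : ℕ) (w' : List Letter) (j : ℕ) :
    esum (Wrd a b w') (a + b + j) = (a : ℤ) - b + esum w' j := by
  have e : esum (Wrd a b w') ((List.replicate a Letter.x).length + (b + j))
      = esum (List.replicate a Letter.x) (List.replicate a Letter.x).length
        + esum (List.replicate b Letter.y ++ w') (b + j) := esum_append _ _ _
  rw [List.length_replicate] at e
  have e2 : esum (List.replicate b Letter.y ++ w') ((List.replicate b Letter.y).length + j)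
      = esum (List.replicate b Letter.y) (List.replicate b Letter.y).length + esum w' j :=
    esum_append _ _ _
  rw [List.length_replicate] at e2
  have e3 : a + b + j = a + (b + j) := by omega
  rw [e3, e, e2, esum_replicate_x, esum_replicate_y]
  simp; omega

lemma esum_V1 (c : ℕ) (w' : List Letter) {i : ℕ} (h : i ≤ c) :
    esum (Vrd c w') i = (i : ℤ) := by
  rw [Vrd, esum_append_le _ _ (by simpa using h), esum_replicate_x]
  omega

lemma esum_V2 (c : ℕ) (w' : List Letter) (j : ℕ) :
    esum (Vrd c w') (c + j) = (c : ℤ) + esum w' j := by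
  have e : esum (Vrd c w') ((List.replicate c Letter.x).length + j)
      = esum (List.replicate c Letter.x) (List.replicate c Letter.x).length + esum w' j :=
    esum_append _ _ _
  rw [List.length_replicate] at e
  rw [e, esum_replicate_x]
  simp

lemma pf_zero (w : List Letter) : pf w 0 = some 0 := by simp [pf, esum_zero]

lemma pf_none (w : List Letter) (i : ℕ) (d : ℤ) (h0 : i ≠ 0) (hN : i ≠ w.length)
    (hd : d ≠ 0) (e1 : esum w (i + 1) - esum w i = d) (e2 : esum w i - esum w (i - 1) = d) :
    pf w i = none := by
  rw [pf, if_neg (by tauto), if_pos]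
  rw [e1, e2]
  exact mul_self_pos.mpr hd

lemma pf_some (w : List Letter) (i : ℕ) (h0 : i ≠ 0) (hN : i ≠ w.length)
    (hle : (esum w (i + 1) - esum w i) * (esum w i - esum w (i - 1)) ≤ 0) :
    pf w i = some (esum w i) := by
  rw [pf, if_neg (by tauto), if_neg (not_lt.mpr hle)]

lemma pf_last (w : List Letter) : pf w w.length = some (esum w w.length) := by
  simp [pf]

end wordlemmas

section profcomp

variable (a b : ℕ) (w' : List Letter)

lemma profile_W (ha : 1 ≤ a) (hb : 1 ≤ b) (hba : b ≤ a)
    (hx : 0 < w'.length → esum w' 1 = 1) (hm0 : w'.length = 0 → a = b) :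
    profile (Wrd a b w')
      = 0 :: (a : ℤ) :: ((a - b : ℕ) : ℤ)
        :: (List.range w'.length).filterMap (fun j => pf (Wrd a b w') (a + b + 1 + j)) := by
  set W := Wrd a b w' with hW
  set m := w'.length with hm
  have hlen : W.length = a + b + m := Wrd_length a b w'
  rw [profile_def, hlen]
  refine filterMap_range_five (pf W) a b m ha hb 0 (a : ℤ) ((a - b : ℕ) : ℤ) (pf_zero W)
    ?_ ?_ ?_ ?_
  · -- ascent interior
    intro i hi1 hi2
    refine pf_none W i 1 (by omega) (by rw [hlen]; omega) one_ne_zero ?_ ?_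
    · rw [esum_W1 a b w' (by omega : i + 1 ≤ a), esum_W1 a b w' (by omega : i ≤ a)]
      push_cast; ring
    · rw [esum_W1 a b w' (by omega : i ≤ a), esum_W1 a b w' (by omega : i - 1 ≤ a)]
      omega
  · -- peak
    have f1 : esum W (a + 1) - esum W a = -1 := by
      have e : a + 1 = a + 1 := rfl
      rw [esum_W2 a b w' (by omega : 1 ≤ b), esum_W1 a b w' (le_refl a)]
      ring
    have f2 : esum W a - esum W (a - 1) = 1 := by
      rw [esum_W1 a b w' (le_refl a), esum_W1 a b w' (by omega : a - 1 ≤ a)]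
      omega
    have := pf_some W a (by omega) (by rw [hlen]; omega) (by rw [f1, f2]; norm_num)
    rw [this, esum_W1 a b w' (le_refl a)]
  · -- descent interior
    intro i hi1 hi2
    obtain ⟨j, rfl⟩ : ∃ j, i = a + j := ⟨i - a, by omega⟩
    have hj1 : 1 ≤ j := by omega
    have hjb : j + 1 ≤ b := by omega
    refine pf_none W (a + j) (-1) (by omega) (by rw [hlen]; omega) (by norm_num) ?_ ?_
    · have e : a + j + 1 = a + (j + 1) := by omega
      rw [e, esum_W2 a b w' hjb, esum_W2 a b w' (by omega : j ≤ b)]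
      push_cast; ring
    · have e : a + j - 1 = a + (j - 1) := by omega
      rw [e, esum_W2 a b w' (by omega : j ≤ b), esum_W2 a b w' (by omega : j - 1 ≤ b)]
      omega
  · -- valley at a+b
    have hval : esum W (a + b) = ((a - b : ℕ) : ℤ) := by
      have h0 := esum_W3 a b w' 0
      rw [esum_zero] at h0
      simp only [Nat.add_zero, add_zero] at h0
      rw [h0]; omega
    by_cases hmz : m = 0
    · have he : a + b = W.length := by omega
      rw [pf, if_pos (Or.inr he), hval]
    · have f1 : esum W (a + b + 1) - esum W (a + b) = 1 := by
        have e1 := esum_W3 a b w' 1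
        rw [e1, hval, hx (by omega)]
        omega
      have f2 : esum W (a + b) - esum W (a + b - 1) = -1 := by
        have e : a + b - 1 = a + (b - 1) := by omega
        rw [e, hval, esum_W2 a b w' (by omega : b - 1 ≤ b)]
        omega
      have := pf_some W (a + b) (by omega) (by rw [hlen]; omega) (by rw [f1, f2]; norm_num)
      rw [this, hval]

lemma profile_V (hba : b ≤ a)
    (hx : 0 < w'.length → esum w' 1 = 1) (hm0 : w'.length = 0 → a = b) :
    profile (Vrd (a - b) w')
      = 0 :: (List.range w'.length).filterMap (fun j => pf (Vrd (a - b) w') (a - b + 1 + j)) := by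
  set c := a - b with hc
  set V := Vrd c w' with hV
  set m := w'.length with hm
  have hlen : V.length = c + m := Vrd_length c w'
  rw [profile_def, hlen]
  refine filterMap_range_three (pf V) c m 0 (pf_zero V) ?_
  intro i hi1 hi2
  have hm1 : 1 ≤ m := by
    by_contra hcon
    have : m = 0 := by omega
    have := hm0 this
    omega
  refine pf_none V i 1 (by omega) (by rw [hlen]; omega) one_ne_zero ?_ ?_
  · by_cases hic : i = c
    · have h2 := esum_V2 c w' 1
      rw [hx (by omega)] at h2
      rw [hic, h2, esum_V1 c w' (le_refl c)]
      ring
    · rw [esum_V1 c w' (by omega : i + 1 ≤ c), esum_V1 c w' (by omega : i ≤ c)]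
      push_cast; ring
  · rw [esum_V1 c w' (by omega : i ≤ c), esum_V1 c w' (by omega : i - 1 ≤ c)]
    omega

lemma rest_eq (hba : b ≤ a) :
    (List.range w'.length).filterMap (fun j => pf (Wrd a b w') (a + b + 1 + j))
      = (List.range w'.length).filterMap (fun j => pf (Vrd (a - b) w') (a - b + 1 + j)) := by
  set c := a - b with hc
  set W := Wrd a b w' with hW
  set V := Vrd c w' with hV
  set m := w'.length with hm
  have lw : W.length = a + b + m := Wrd_length a b w'
  have lv : V.length = c + m := Vrd_length c w'
  refine List.filterMap_congr fun j hj => ?_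
  have hjm : j < m := List.mem_range.mp hj
  have hcast : ((c : ℤ)) = (a : ℤ) - b := by omega
  have g : ∀ k : ℕ, esum W (a + b + k) = esum V (c + k) := by
    intro k
    rw [esum_W3 a b w' k, esum_V2 c w' k, hcast]
  have g1 : esum W (a + b + 1 + j + 1) = esum V (c + 1 + j + 1) := by
    have e1 : a + b + 1 + j + 1 = a + b + (j + 2) := by omega
    have e2 : c + 1 + j + 1 = c + (j + 2) := by omega
    rw [e1, e2, g]
  have g2 : esum W (a + b + 1 + j) = esum V (c + 1 + j) := by
    have e1 : a + b + 1 + j = a + b + (j + 1) := by omega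
    have e2 : c + 1 + j = c + (j + 1) := by omega
    rw [e1, e2, g]
  have g3 : esum W (a + b + 1 + j - 1) = esum V (c + 1 + j - 1) := by
    have e1 : a + b + 1 + j - 1 = a + b + j := by omega
    have e2 : c + 1 + j - 1 = c + j := by omega
    rw [e1, e2, g]
  by_cases hend : j + 1 = m
  · have e1 : a + b + 1 + j = W.length := by omega
    have e2 : c + 1 + j = V.length := by omega
    rw [pf, pf, if_pos (Or.inr e1), if_pos (Or.inr e2), g2]
  · have e1 : ¬(a + b + 1 + j = 0 ∨ a + b + 1 + j = W.length) := by
      push_neg; constructor <;> omega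
    have e2 : ¬(c + 1 + j = 0 ∨ c + 1 + j = V.length) := by
      push_neg; constructor <;> omega
    rw [pf, pf, if_neg e1, if_neg e2, g1, g2, g3]

end profcomp

section ccoefrec
variable {q : F} (hq0 : q ≠ 0) (hq : ∀ k : ℕ, 0 < k → q ^ k ≠ 1)

include hq0 hq in
lemma Ccoef_rec (a b : ℕ) (w' : List Letter) (ha : 1 ≤ a) (hb : 1 ≤ b) (hba : b ≤ a) :
    Ccoef q (Wrd a b w') * (qfac q ((a - b : ℕ) : ℤ) * qfac q (((a - b : ℕ) : ℤ) + 1))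
      = qfac q (a : ℤ) * qfac q ((a : ℤ) + 1) * Ccoef q (Vrd (a - b) w') := by
  set c := a - b with hc
  set m := w'.length with hm
  set T := ∏ j ∈ Finset.range (m + 1), qint q (1 + ((c : ℤ) + esum w' j)) with hT
  have hcw : Ccoef q (Wrd a b w')
      = (qfac q (a : ℤ) * ∏ j ∈ Finset.range b, qint q (1 + ((a : ℤ) - j))) * T := by
    rw [Ccoef, Wrd_length]
    have e : a + b + m + 1 = (a + b) + (m + 1) := by omega
    rw [e, Finset.prod_range_add]
    congr 1
    · rw [Finset.prod_range_add]
      congr 1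
      · rw [qfac_natCast]
        refine Finset.prod_congr rfl fun i hi => ?_
        rw [esum_W1 a b w' (le_of_lt (Finset.mem_range.mp hi))]
        congr 1; ring
      · refine Finset.prod_congr rfl fun j hj => ?_
        rw [esum_W2 a b w' (le_of_lt (Finset.mem_range.mp hj))]
    · refine Finset.prod_congr rfl fun j _ => ?_
      rw [esum_W3 a b w' j]
      congr 1
      omega
  have hprod : (∏ j ∈ Finset.range b, qint q (1 + ((a : ℤ) - j))) * qfac q ((c + 1 : ℕ) : ℤ)
      = qfac q ((a : ℤ) + 1) := by
    have h1 : ∏ j ∈ Finset.range b, qint q (1 + ((a : ℤ) - j))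
        = ∏ j ∈ Finset.range b, qint q (((c + 1 : ℕ) : ℤ) + j + 1) := by
      rw [← Finset.prod_range_reflect (fun j => qint q (((c + 1 : ℕ) : ℤ) + j + 1)) b]
      refine Finset.prod_congr rfl fun j hj => ?_
      have hjb := Finset.mem_range.mp hj
      congr 1
      omega
    rw [h1]
    have h2 := qfac_add (q := q) (c + 1) b
    have h3 : (((c + 1 : ℕ)) : ℤ) + (b : ℤ) = (a : ℤ) + 1 := by omega
    rw [h3] at h2
    rw [h2]; ring
  have hcv : Ccoef q (Vrd c w') = qfac q (c : ℤ) * T := by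
    rw [Ccoef, Vrd_length]
    have e : c + m + 1 = c + (m + 1) := by omega
    rw [e, Finset.prod_range_add]
    congr 1
    · rw [qfac_natCast]
      refine Finset.prod_congr rfl fun i hi => ?_
      rw [esum_V1 c w' (le_of_lt (Finset.mem_range.mp hi))]
      congr 1; ring
    · refine Finset.prod_congr rfl fun j _ => ?_
      rw [esum_V2 c w' j]
  have hfc : qfac q ((c + 1 : ℕ) : ℤ) = qfac q ((c : ℤ) + 1) := by norm_num
  rw [hcw, hcv, ← hfc, ← hprod]
  ring

end ccoefrec

section decomp

lemma dropWhile_head_false {α : Type*} (p : α → Bool) :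
    ∀ (l : List α) (z : α) (st : List α), l.dropWhile p = z :: st → p z = false := by
  intro l
  induction l with
  | nil => intro z st h; simp [List.dropWhile] at h
  | cons a t ih =>
    intro z st h
    rw [List.dropWhile_cons] at h
    by_cases hp : p a = true
    · rw [if_pos hp] at h; exact ih z st h
    · rw [if_neg hp] at h
      injection h with h1 _
      rw [← h1]
      simpa using hp

lemma exists_decomp (w : List Letter) (hw : IsCatalan w) (hne : w ≠ []) :
    ∃ a b w', 1 ≤ a ∧ 1 ≤ b ∧ w = Wrd a b w' ∧ (0 < w'.length → esum w' 1 = 1) := by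
  classical
  set px : Letter → Bool := fun l => decide (l = Letter.x) with hpx
  set py : Letter → Bool := fun l => decide (l = Letter.y) with hpy
  set A := w.takeWhile px with hA
  set s := w.dropWhile px with hs
  set a := A.length with haa
  have hAr : A = List.replicate a Letter.x := by
    refine List.eq_replicate_iff.mpr ⟨rfl, fun z hz => ?_⟩
    have := List.mem_takeWhile_imp hz
    simpa [hpx] using this
  have hws : A ++ s = w := List.takeWhile_append_dropWhile
  have hhead : ∃ t, w = Letter.x :: t := by
    obtain ⟨z, t, rfl⟩ := List.exists_cons_of_ne_nil hne
    cases z with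
    | x => exact ⟨t, rfl⟩
    | y =>
      exfalso
      have h1 := hw.1 1 (by simp)
      rw [esum_one] at h1
      norm_num [bar] at h1
  obtain ⟨t, hwt⟩ := hhead
  have ha : 1 ≤ a := by
    have hAt : A = Letter.x :: t.takeWhile px := by
      rw [hA, hwt, List.takeWhile_cons, if_pos (by simp [hpx])]
    rw [haa, hAt]
    simp
  have hsne : s ≠ [] := by
    intro hcon
    have hwA : w = A := by rw [← hws, hcon, List.append_nil]
    have h2 := hw.2
    rw [hwA, hAr, List.length_replicate, esum_replicate_x] at h2
    simp at h2
    omega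
  obtain ⟨z, st, hzst⟩ := List.exists_cons_of_ne_nil hsne
  have hz : z = Letter.y := by
    have hfalse := dropWhile_head_false px w z st (by rw [← hs, hzst])
    cases z with
    | x => simp [hpx] at hfalse
    | y => rfl
  subst hz
  set B := s.takeWhile py with hB
  set w'' := s.dropWhile py with hw''
  set b := B.length with hbb
  have hBr : B = List.replicate b Letter.y := by
    refine List.eq_replicate_iff.mpr ⟨rfl, fun z hz => ?_⟩
    have := List.mem_takeWhile_imp hz
    simpa [hpy] using this
  have hb : 1 ≤ b := by
    have hBt : B = Letter.y :: st.takeWhile py := by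
      rw [hB, hzst, List.takeWhile_cons, if_pos (by simp [hpy])]
    rw [hbb, hBt]
    simp
  refine ⟨a, b, w'', ha, hb, ?_, ?_⟩
  · rw [Wrd, ← hAr, ← hBr]
    rw [← hws]
    congr 1
    exact List.takeWhile_append_dropWhile.symm
  · intro hlen
    have hwne : w'' ≠ [] := by
      intro hcon; rw [hcon] at hlen; simp at hlen
    obtain ⟨u, ut, hu⟩ := List.exists_cons_of_ne_nil hwne
    have hufalse := dropWhile_head_false py s u ut (by rw [← hw'', hu])
    have hux : u = Letter.x := by
      cases u with
      | x => rfl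
      | y => simp [hpy] at hufalse
    rw [hu, hux, esum_one]
    rfl

end decomp

section mainproof
variable {q : F} (hq0 : q ≠ 0) (hq : ∀ k : ℕ, 0 < k → q ^ k ≠ 1)

include hq0 hq in
lemma nil_case (r : ℕ) (ℓ h : ℕ → ℤ) (hp : profile ([] : List Letter) = P r ℓ h) :
    Ccoef q ([] : List Letter) = Cprof q r ℓ h := by
  have hprof : profile ([] : List Letter) = [0] := by
    rw [profile_def]
    rw [show ([] : List Letter).length + 1 = 1 from rfl, filterMap_range_one, pf_zero]
    rfl
  rw [hprof] at hp
  have hlenp := congrArg List.length hp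
  rw [P_length] at hlenp
  simp at hlenp
  have hr : r = 0 := by omega
  subst hr
  rw [P_zero] at hp
  have hl0 : ℓ 0 = 0 := by
    injection hp with h1 _
    exact h1.symm
  have hc : Ccoef q ([] : List Letter) = 1 := by
    rw [Ccoef]
    rw [show ([] : List Letter).length + 1 = 1 from rfl, Finset.prod_range_one, esum_zero,
      add_zero, qint_one hq0 hq]
  have hcp : Cprof q 0 ℓ h = 1 := by
    rw [Cprof, show Finset.Icc 1 0 = (∅ : Finset ℕ) from rfl, Finset.prod_empty,
      Finset.prod_range_one, hl0, qfac_zero, zero_add, qfac_one hq0 hq]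
    norm_num
  rw [hc, hcp]

include hq0 hq in
lemma main_aux : ∀ n (w : List Letter), w.length ≤ n → IsCatalan w →
    ∀ r (ℓ h : ℕ → ℤ), profile w = P r ℓ h → Ccoef q w = Cprof q r ℓ h := by
  intro n
  induction n with
  | zero =>
    intro w hlen hw r ℓ h hp
    have hwnil : w = [] := List.length_eq_zero_iff.mp (by omega)
    subst hwnil
    exact nil_case hq0 hq r ℓ h hp
  | succ n ih =>
    intro w hlen hw r ℓ h hp
    by_cases hne : w = []
    · subst hne
      exact nil_case hq0 hq r ℓ h hp
    obtain ⟨a, b, w', ha, hb, hwd, hx⟩ := exists_decomp w hw hne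
    subst hwd
    have hba : b ≤ a := by
      have h1 := hw.1 (a + b) (by rw [Wrd_length]; omega)
      have e := esum_W3 a b w' 0
      simp only [Nat.add_zero, esum_zero, add_zero] at e
      rw [e] at h1
      omega
    have hm0 : w'.length = 0 → a = b := by
      intro hmz
      have hL : (Wrd a b w').length = a + b := by rw [Wrd_length]; omega
      have h2 := hw.2
      rw [hL] at h2
      have e := esum_W3 a b w' 0
      simp only [Nat.add_zero, esum_zero, add_zero] at e
      rw [e] at h2
      omega
    have hpw := profile_W a b w' ha hb hba hx hm0
    rw [hpw] at hp
    cases r with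
    | zero =>
      exfalso
      rw [P_zero] at hp
      have := congrArg List.length hp
      simp at this
    | succ r' =>
      rw [P_cons] at hp
      injection hp with hl0 hp
      injection hp with hh1 hp
      set c := a - b with hc
      set m := w'.length with hm
      set ℓp : ℕ → ℤ := fun i => ℓ (i + 1) with hlp
      set hp' : ℕ → ℤ := fun i => h (i + 1) with hhp
      have hl1 : ((c : ℕ) : ℤ) = ℓp 0 := by
        rw [P_tail_congr r' ℓp ℓp hp' (fun _ _ => rfl)] at hp
        injection hp with h1 _
      have hresttail : (List.range m).filterMap (fun j => pf (Wrd a b w') (a + b + 1 + j))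
          = (P r' ℓp hp').tail := by
        have := congrArg List.tail hp
        simpa using this
      -- Catalan for V
      have hvcat : IsCatalan (Vrd c w') := by
        constructor
        · intro i hi
          rw [Vrd_length] at hi
          by_cases hic : i ≤ c
          · rw [esum_V1 c w' hic]
            omega
          · obtain ⟨j, rfl⟩ : ∃ j, i = c + j := ⟨i - c, by omega⟩
            rw [esum_V2]
            have h1 := hw.1 (a + b + j) (by rw [Wrd_length]; omega)
            rw [esum_W3] at h1
            omega
        · have h2 := hw.2
          rw [Wrd_length] at h2
          rw [esum_W3 a b w' w'.length] at h2
          rw [Vrd_length, esum_V2]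
          omega
      have hvlen : (Vrd c w').length ≤ n := by
        rw [Vrd_length]
        have := hlen
        rw [Wrd_length] at this
        omega
      set ℓ' : ℕ → ℤ := fun i => if i = 0 then (0 : ℤ) else ℓ (i + 1) with hl'
      have hpfv : profile (Vrd c w') = P r' ℓ' hp' := by
        rw [profile_V a b w' hba hx hm0]
        rw [P_tail_congr r' ℓ' ℓp hp' (fun i hi => if_neg (by omega : ¬ i = 0))]
        rw [← hresttail, rest_eq a b w' hba]
        congr 1
      have ihv := ih (Vrd c w') hvlen hvcat r' ℓ' hp' hpfv
      have hrec := Ccoef_rec hq0 hq a b w' ha hb hba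
      have hcs := Cprof_succ hq0 hq r' ℓ h
      have hl1' : ((c : ℕ) : ℤ) = ℓ 1 := hl1
      rw [← hc] at hrec
      rw [hcs, ← hh1, ← hl0, ← hl1']
      rw [show (fun i => if i = 0 then (0:ℤ) else ℓ (i + 1)) = ℓ' from rfl]
      rw [← ihv, qfac_zero, zero_add, qfac_one hq0 hq]
      have hne1 : qfac q ((c : ℕ) : ℤ) ≠ 0 := qfac_ne hq0 hq _
      have hne2 : qfac q (((c : ℕ) : ℤ) + 1) ≠ 0 := qfac_ne hq0 hq _
      field_simp
      linear_combination hrec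

end mainproof

end AuxProofs

theorem stmt14 {F : Type*} [Field F] (q : F) (hq0 : q ≠ 0)
    (hq : ∀ k : ℕ, 0 < k → q ^ k ≠ 1) (w : List Letter) (hw : IsCatalan w)
    (r : ℕ) (ℓ h : ℕ → ℤ) (hp : profile w = P r ℓ h) :
    Ccoef q w = Cprof q r ℓ h :=
  main_aux hq0 hq w.length w le_rfl hw r ℓ h hp
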